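/- Let k ≥ 3 be an integer and let G be a finite connected twin-free simple graph. Then G admits a proper coloring with k colors if and only if the graph G* admits an rlid-coloring with k colors. -/

import Mathlib

open SimpleGraph Set

open SimpleGraph Set

variable {V : Type*}

/-- The closed neighborhood of a vertex. -/
def closedNbhd (G : SimpleGraph V) (v : V) : Set V := insert v (G.neighborSet v)

/-- A (not necessarily proper) coloring `c : V → Fin k` is a relaxed locally identifying coloring
(rlid-coloring) if any two adjacent vertices with distinct closed neighborhoods receive distinct
sets of colors on their closed neighborhoods. -/
def IsRlidColoring (G : SimpleGraph V) {k : ℕ} (c : V → Fin k) : Prop :=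
  ∀ u v : V, G.Adj u v → closedNbhd G u ≠ closedNbhd G v →
    c '' closedNbhd G u ≠ c '' closedNbhd G v

/-- The relaxed locally identifying chromatic number: the least `k` such that `G` admits an
rlid-coloring with `k` colors. -/
noncomputable def rlidChromNum (G : SimpleGraph V) : ℕ :=
  sInf {k : ℕ | ∃ c : V → Fin k, IsRlidColoring G c}

/-- A graph is twin-free if distinct vertices have distinct closed neighborhoods. -/
def TwinFree (G : SimpleGraph V) : Prop :=
  ∀ u v : V, closedNbhd G u = closedNbhd G v → u = v

/-- The vertex set of `G*`: the original vertices, one internal vertex `(u,v)` for each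
oriented edge `uv` (so each edge `uv` of `G` is replaced by the path `u-(u,v)-(v,u)-v`),
and one pendant vertex attached to each original vertex. -/
def starVerts (G : SimpleGraph V) : Type _ := V ⊕ {p : V × V // G.Adj p.1 p.2} ⊕ V

/-- The graph `G*` obtained from `G` by subdividing each edge `uv` into a path
`u - a_{uv} - b_{uv} - v` of length 3 (here `a_{uv} = (u,v)` and `b_{uv} = (v,u)`) and
attaching a new pendant vertex (leaf) to each original vertex of `G`. -/
def GStar (G : SimpleGraph V) : SimpleGraph (starVerts G) :=
  SimpleGraph.fromRel (fun x y =>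
    match x, y with
    | Sum.inl u, Sum.inr (Sum.inl p) => u = p.1.1
    | Sum.inl u, Sum.inr (Sum.inr w) => u = w
    | Sum.inr (Sum.inl p), Sum.inr (Sum.inl q) => p.1.1 = q.1.2 ∧ p.1.2 = q.1.1
    | _, _ => False)

section Lemmas
variable {G : SimpleGraph V}

lemma adj_inl_internal (u : V) (p : {p : V × V // G.Adj p.1 p.2}) :
    (GStar G).Adj (Sum.inl u) (Sum.inr (Sum.inl p)) ↔ u = p.1.1 := by
  exact ⟨fun h => h.2.elim id False.elim, fun h => ⟨Sum.inl_ne_inr, Or.inl h⟩⟩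

lemma adj_inl_pendant (u w : V) :
    (GStar G).Adj (Sum.inl u) (Sum.inr (Sum.inr w)) ↔ u = w := by
  exact ⟨fun h => h.2.elim id False.elim, fun h => ⟨Sum.inl_ne_inr, Or.inl h⟩⟩

lemma adj_inl_inl (u v : V) : ¬ (GStar G).Adj (Sum.inl u) (Sum.inl v) := by
  rintro ⟨-, h | h⟩ <;> exact h

lemma adj_internal_internal (p q : {p : V × V // G.Adj p.1 p.2}) :
    (GStar G).Adj (Sum.inr (Sum.inl p)) (Sum.inr (Sum.inl q)) ↔
      p.1.1 = q.1.2 ∧ p.1.2 = q.1.1 := by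
  simp only [GStar, SimpleGraph.fromRel_adj]
  constructor
  · rintro ⟨-, h | h⟩
    · exact h
    · exact ⟨h.2.symm, h.1.symm⟩
  · rintro ⟨h1, h2⟩
    refine ⟨?_, Or.inl ⟨h1, h2⟩⟩
    intro he
    have hpq : p = q := Sum.inl.inj (Sum.inr.inj he)
    subst hpq
    exact G.loopless.irrefl _ (h1 ▸ p.2)

lemma adj_internal_pendant (p : {p : V × V // G.Adj p.1 p.2}) (w : V) :
    ¬ (GStar G).Adj (Sum.inr (Sum.inl p)) (Sum.inr (Sum.inr w)) := by
  rintro ⟨-, h | h⟩ <;> exact h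

lemma adj_pendant_pendant (w w' : V) :
    ¬ (GStar G).Adj (Sum.inr (Sum.inr w)) (Sum.inr (Sum.inr w')) := by
  rintro ⟨-, h | h⟩ <;> exact h

end Lemmas

section Nbhd
variable {G : SimpleGraph V}

/-- The swap of an oriented edge. -/
def eswap (p : {p : V × V // G.Adj p.1 p.2}) : {p : V × V // G.Adj p.1 p.2} :=
  ⟨(p.1.2, p.1.1), p.2.symm⟩

lemma closedNbhd_internal (p : {p : V × V // G.Adj p.1 p.2}) :
    closedNbhd (GStar G) (Sum.inr (Sum.inl p)) =
      {Sum.inr (Sum.inl p), Sum.inl p.1.1, Sum.inr (Sum.inl (eswap p))} := by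
  ext y
  simp only [closedNbhd, Set.mem_insert_iff, SimpleGraph.mem_neighborSet,
    Set.mem_singleton_iff]
  constructor
  · rintro (rfl | hadj)
    · exact Or.inl rfl
    · rcases y with u | q | w
      · refine Or.inr (Or.inl ?_)
        have hu := (adj_inl_internal u p).mp hadj.symm
        rw [hu]
      · refine Or.inr (Or.inr ?_)
        obtain ⟨h1, h2⟩ := (adj_internal_internal p q).mp hadj
        have : q = eswap p := Subtype.ext (Prod.ext h2.symm h1.symm)
        rw [this]; exact Set.mem_singleton _
      · exact absurd hadj (adj_internal_pendant p w)
  · rintro (rfl | rfl | rfl)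
    · exact Or.inl rfl
    · exact Or.inr ((adj_inl_internal _ p).mpr rfl).symm
    · exact Or.inr ((adj_internal_internal p _).mpr ⟨rfl, rfl⟩)

lemma closedNbhd_pendant (w : V) :
    closedNbhd (GStar G) (Sum.inr (Sum.inr w)) =
      {Sum.inr (Sum.inr w), Sum.inl w} := by
  ext y
  simp only [closedNbhd, Set.mem_insert_iff, SimpleGraph.mem_neighborSet,
    Set.mem_singleton_iff]
  constructor
  · rintro (rfl | hadj)
    · exact Or.inl rfl
    · rcases y with u | q | w'
      · exact Or.inr (by rw [(adj_inl_pendant u w).mp hadj.symm]; exact Set.mem_singleton _)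
      · exact absurd hadj.symm (adj_internal_pendant q w)
      · exact absurd hadj (adj_pendant_pendant w w')
  · rintro (rfl | rfl)
    · exact Or.inl rfl
    · exact Or.inr ((adj_inl_pendant _ _).mpr rfl).symm

lemma mem_closedNbhd_inl (u : V) (y : starVerts G) :
    y ∈ closedNbhd (GStar G) (Sum.inl u) ↔
      y = Sum.inl u ∨ y = Sum.inr (Sum.inr u) ∨
        ∃ p : {p : V × V // G.Adj p.1 p.2}, p.1.1 = u ∧ y = Sum.inr (Sum.inl p) := by
  simp only [closedNbhd, Set.mem_insert_iff, SimpleGraph.mem_neighborSet]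
  constructor
  · rintro (rfl | hadj)
    · exact Or.inl rfl
    · rcases y with v | q | w
      · exact absurd hadj (adj_inl_inl u v)
      · exact Or.inr (Or.inr ⟨q, ((adj_inl_internal u q).mp hadj).symm, rfl⟩)
      · exact Or.inr (Or.inl (by rw [(adj_inl_pendant u w).mp hadj]))
  · rintro (rfl | rfl | ⟨p, hp, rfl⟩)
    · exact Or.inl rfl
    · exact Or.inr ((adj_inl_pendant u u).mpr rfl)
    · exact Or.inr ((adj_inl_internal u p).mpr hp.symm)

end Nbhd

section Main
variable {G : SimpleGraph V} {k : ℕ}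

lemma eswap_eswap (p : {p : V × V // G.Adj p.1 p.2}) : eswap (eswap p) = p :=
  Subtype.ext (by simp [eswap])

lemma exists_third (hk : 3 ≤ k) (a b : Fin k) : ∃ x : Fin k, x ≠ a ∧ x ≠ b := by
  by_contra h
  push_neg at h
  have hsub : (Finset.univ : Finset (Fin k)) ⊆ {a, b} := by
    intro x _
    rcases eq_or_ne x a with rfl | hx
    · simp
    · simp [h x hx]
  have h1 := Finset.card_le_card hsub
  have h2 : ({a, b} : Finset (Fin k)).card ≤ 2 :=
    (Finset.card_insert_le _ _).trans (by simp)
  simp only [Finset.card_univ, Fintype.card_fin] at h1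
  omega

lemma sdiff_pair_nonempty (hk : 3 ≤ k) (a b : Fin k) :
    ((Finset.univ : Finset (Fin k)) \ {a, b}).Nonempty := by
  obtain ⟨x, hxa, hxb⟩ := exists_third hk a b
  exact ⟨x, by simp [hxa, hxb]⟩

noncomputable def pick2 (hk : 3 ≤ k) (a b : Fin k) : Fin k :=
  ((Finset.univ : Finset (Fin k)) \ {a, b}).min' (sdiff_pair_nonempty hk a b)

lemma pick2_ne (hk : 3 ≤ k) (a b : Fin k) : pick2 hk a b ≠ a ∧ pick2 hk a b ≠ b := by
  have h := Finset.min'_mem _ (sdiff_pair_nonempty hk a b)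
  simp only [Finset.mem_sdiff, Finset.mem_insert, Finset.mem_singleton] at h
  exact ⟨fun hh => h.2 (Or.inl hh), fun hh => h.2 (Or.inr hh)⟩

lemma pick2_comm (hk : 3 ≤ k) (a b : Fin k) : pick2 hk a b = pick2 hk b a := by
  unfold pick2
  congr 1
  rw [Finset.pair_comm]

lemma image_closedNbhd_internal (c : starVerts G → Fin k)
    (p : {p : V × V // G.Adj p.1 p.2}) :
    c '' closedNbhd (GStar G) (Sum.inr (Sum.inl p)) =
      {c (Sum.inr (Sum.inl p)), c (Sum.inl p.1.1), c (Sum.inr (Sum.inl (eswap p)))} := by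
  rw [closedNbhd_internal]
  exact Set.image_insert_eq.trans
    (congrArg (insert _) (Set.image_insert_eq.trans (congrArg (insert _) Set.image_singleton)))

lemma image_closedNbhd_pendant (c : starVerts G → Fin k) (w : V) :
    c '' closedNbhd (GStar G) (Sum.inr (Sum.inr w)) =
      {c (Sum.inr (Sum.inr w)), c (Sum.inl w)} := by
  rw [closedNbhd_pendant]
  exact Set.image_insert_eq.trans (congrArg (insert _) Set.image_singleton)

lemma mem_image_closedNbhd_inl (c : starVerts G → Fin k) (u : V) (x : Fin k) :
    x ∈ c '' closedNbhd (GStar G) (Sum.inl u) ↔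
      x = c (Sum.inl u) ∨ x = c (Sum.inr (Sum.inr u)) ∨
        ∃ p : {p : V × V // G.Adj p.1 p.2}, p.1.1 = u ∧ x = c (Sum.inr (Sum.inl p)) := by
  constructor
  · rintro ⟨y, hy, rfl⟩
    rcases (mem_closedNbhd_inl u y).mp hy with rfl | rfl | ⟨p, hp, rfl⟩
    · exact Or.inl rfl
    · exact Or.inr (Or.inl rfl)
    · exact Or.inr (Or.inr ⟨p, hp, rfl⟩)
  · rintro (rfl | rfl | ⟨p, hp, rfl⟩)
    · exact ⟨_, (mem_closedNbhd_inl u _).mpr (Or.inl rfl), rfl⟩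
    · exact ⟨_, (mem_closedNbhd_inl u _).mpr (Or.inr (Or.inl rfl)), rfl⟩
    · exact ⟨_, (mem_closedNbhd_inl u _).mpr (Or.inr (Or.inr ⟨p, hp, rfl⟩)), rfl⟩

end Main

theorem colorable_iff_star_rlid {V : Type*} [Fintype V] (G : SimpleGraph V)
    (hconn : G.Connected) (htf : TwinFree G) (k : ℕ) (hk : 3 ≤ k) :
    G.Colorable k ↔ ∃ c : starVerts G → Fin k, IsRlidColoring (GStar G) c := by
  constructor
  · rintro ⟨C⟩
    classical
    -- color of internal vertices
    set g : {p : V × V // G.Adj p.1 p.2} → Fin k :=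
      fun p => pick2 hk (C p.1.1) (C p.1.2) with hg
    have hgswap : ∀ p, g (eswap p) = g p := by
      intro p
      simp only [hg, eswap]
      exact pick2_comm hk _ _
    have hgne : ∀ p, g p ≠ C p.1.1 ∧ g p ≠ C p.1.2 := fun p => pick2_ne hk _ _
    -- color of pendant vertices
    set P : V → Fin k → Prop :=
      fun u x => x ≠ C u ∧ ∀ q : {p : V × V // G.Adj p.1 p.2}, q.1.1 = u → x ≠ g q with hP
    set hp : V → Fin k := fun u => if h : ∃ x, P u x then Classical.choose h else C u with hhp
    set c : starVerts G → Fin k := Sum.elim (fun u => C u) (Sum.elim g hp) with hc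
    refine ⟨c, ?_⟩
    -- membership facts
    have hmemInl : ∀ u x, x ∈ c '' closedNbhd (GStar G) (Sum.inl u) ↔
        x = C u ∨ x = hp u ∨ ∃ p : {p : V × V // G.Adj p.1 p.2}, p.1.1 = u ∧ x = g p := by
      intro u x
      rw [mem_image_closedNbhd_inl]
      simp [hc]
    have himgInt : ∀ p : {p : V × V // G.Adj p.1 p.2},
        c '' closedNbhd (GStar G) (Sum.inr (Sum.inl p)) = {g p, C p.1.1} := by
      intro p
      rw [image_closedNbhd_internal]
      simp only [hc, Sum.elim_inr, Sum.elim_inl, hgswap]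
      ext x
      simp only [Set.mem_insert_iff, Set.mem_singleton_iff]
      tauto
    have himgPen : ∀ w, c '' closedNbhd (GStar G) (Sum.inr (Sum.inr w)) = {hp w, C w} := by
      intro w
      rw [image_closedNbhd_pendant]
      simp [hc]
    -- key case 1 : original vertex vs internal vertex
    have key1 : ∀ (u : V) (p : {p : V × V // G.Adj p.1 p.2}), p.1.1 = u →
        c '' closedNbhd (GStar G) (Sum.inl u) ≠
          c '' closedNbhd (GStar G) (Sum.inr (Sum.inl p)) := by
      intro u p hpu heq
      rw [himgInt, hpu] at heq
      by_cases hex : ∃ x, P u x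
      · have hw := Classical.choose_spec hex
        have hwmem : Classical.choose hex ∈ c '' closedNbhd (GStar G) (Sum.inl u) := by
          rw [hmemInl]
          refine Or.inr (Or.inl ?_)
          simp only [hhp, dif_pos hex]
        rw [heq] at hwmem
        simp only [Set.mem_insert_iff, Set.mem_singleton_iff] at hwmem
        rcases hwmem with h | h
        · exact hw.2 p hpu h
        · exact hw.1 h
      · push_neg at hex
        obtain ⟨x, hx1, hx2⟩ := exists_third hk (C u) (g p)
        simp only [hP, not_and, not_forall, not_not] at hex
        obtain ⟨q, hq1, hq2⟩ := hex x hx1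
        have hxmem : x ∈ c '' closedNbhd (GStar G) (Sum.inl u) := by
          rw [hmemInl]
          exact Or.inr (Or.inr ⟨q, hq1, hq2⟩)
        rw [heq] at hxmem
        simp only [Set.mem_insert_iff, Set.mem_singleton_iff] at hxmem
        rcases hxmem with h | h
        · exact hx2 h
        · exact hx1 h
    -- key case 2 : original vertex vs its pendant vertex
    have key2 : ∀ u : V,
        closedNbhd (GStar G) (Sum.inl u) ≠ closedNbhd (GStar G) (Sum.inr (Sum.inr u)) →
        c '' closedNbhd (GStar G) (Sum.inl u) ≠
          c '' closedNbhd (GStar G) (Sum.inr (Sum.inr u)) := by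
      intro u hN heq
      rw [himgPen] at heq
      by_cases hdeg : ∃ v, G.Adj u v
      · obtain ⟨v, hv⟩ := hdeg
        set p : {p : V × V // G.Adj p.1 p.2} := ⟨(u, v), hv⟩ with hpdef
        by_cases hex : ∃ x, P u x
        · have hgp : g p ∈ c '' closedNbhd (GStar G) (Sum.inl u) := by
            rw [hmemInl]
            exact Or.inr (Or.inr ⟨p, rfl, rfl⟩)
          rw [heq] at hgp
          simp only [Set.mem_insert_iff, Set.mem_singleton_iff] at hgp
          rcases hgp with h | h
          · have hw := Classical.choose_spec hex
            have : hp u = Classical.choose hex := by simp only [hhp, dif_pos hex]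
            exact hw.2 p rfl (this ▸ h.symm)
          · exact (hgne p).1 h
        · push_neg at hex
          obtain ⟨x, hx1, hx2⟩ := exists_third hk (C u) (hp u)
          simp only [hP, not_and, not_forall, not_not] at hex
          obtain ⟨q, hq1, hq2⟩ := hex x hx1
          have hxmem : x ∈ c '' closedNbhd (GStar G) (Sum.inl u) := by
            rw [hmemInl]
            exact Or.inr (Or.inr ⟨q, hq1, hq2⟩)
          rw [heq] at hxmem
          simp only [Set.mem_insert_iff, Set.mem_singleton_iff] at hxmem
          rcases hxmem with h | h
          · exact hx2 h
          · exact hx1 h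
      · push_neg at hdeg
        apply hN
        ext y
        rw [mem_closedNbhd_inl, closedNbhd_pendant]
        show _ ↔ y = _ ∨ y = _
        constructor
        · rintro (rfl | rfl | ⟨p, hp1, rfl⟩)
          · exact Or.inr rfl
          · exact Or.inl rfl
          · exact absurd (hp1 ▸ p.2) (hdeg p.1.2)
        · rintro (rfl | rfl)
          · exact Or.inr (Or.inl rfl)
          · exact Or.inl rfl
    -- key case 3 : two internal vertices
    have key3 : ∀ p q : {p : V × V // G.Adj p.1 p.2},
        p.1.1 = q.1.2 → p.1.2 = q.1.1 →
        c '' closedNbhd (GStar G) (Sum.inr (Sum.inl p)) ≠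
          c '' closedNbhd (GStar G) (Sum.inr (Sum.inl q)) := by
      intro p q h1 h2 heq
      have hq : q = eswap p := Subtype.ext (Prod.ext h2.symm h1.symm)
      subst hq
      rw [himgInt, himgInt, hgswap] at heq
      have : C p.1.1 ∈ ({g p, C (eswap p).1.1} : Set (Fin k)) := by
        rw [← heq]; simp
      simp only [Set.mem_insert_iff, Set.mem_singleton_iff, eswap] at this
      rcases this with h | h
      · exact (hgne p).1 h.symm
      · exact C.valid p.2 h
    -- dispatch all cases
    intro a b hadj hN
    rcases a with u | p | w <;> rcases b with u' | p' | w'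
    · exact absurd hadj (adj_inl_inl u u')
    · exact key1 u p' ((adj_inl_internal u p').mp hadj).symm
    · have : u = w' := (adj_inl_pendant u w').mp hadj
      subst this
      exact key2 u hN
    · intro heq
      exact key1 u' p ((adj_inl_internal u' p).mp hadj.symm).symm heq.symm
    · obtain ⟨h1, h2⟩ := (adj_internal_internal p p').mp hadj
      exact key3 p p' h1 h2
    · exact absurd hadj (adj_internal_pendant p w')
    · have : w = u' := ((adj_inl_pendant u' w).mp hadj.symm).symm
      subst this
      intro heq
      exact key2 w (Ne.symm hN) heq.symm
    · exact absurd hadj.symm (adj_internal_pendant p' w)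
    · exact absurd hadj (adj_pendant_pendant w w')
  · rintro ⟨c, hc⟩
    refine ⟨SimpleGraph.Coloring.mk (fun u => c (Sum.inl u)) ?_⟩
    intro u v huv heq
    set p : {p : V × V // G.Adj p.1 p.2} := ⟨(u, v), huv⟩ with hpdef
    set q : {p : V × V // G.Adj p.1 p.2} := ⟨(v, u), huv.symm⟩ with hqdef
    have hadj : (GStar G).Adj (Sum.inr (Sum.inl p)) (Sum.inr (Sum.inl q)) :=
      (adj_internal_internal p q).mpr ⟨rfl, rfl⟩
    have hN : closedNbhd (GStar G) (Sum.inr (Sum.inl p)) ≠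
        closedNbhd (GStar G) (Sum.inr (Sum.inl q)) := by
      intro h
      have hmem : (Sum.inl u : starVerts G) ∈ closedNbhd (GStar G) (Sum.inr (Sum.inl q)) := by
        rw [← h, closedNbhd_internal]
        exact Or.inr (Or.inl rfl)
      rw [closedNbhd_internal] at hmem
      rcases hmem with h' | h' | h'
      · exact absurd h' (by simp)
      · exact huv.ne (Sum.inl.inj h')
      · exact absurd h' Sum.inl_ne_inr
    have himg := hc _ _ hadj hN
    apply himg
    rw [image_closedNbhd_internal, image_closedNbhd_internal]
    have heswp : eswap p = q := Subtype.ext rfl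
    have heswq : eswap q = p := Subtype.ext rfl
    rw [heswp, heswq]
    ext x
    simp only [Set.mem_insert_iff, Set.mem_singleton_iff]
    rw [show c (Sum.inl u) = c (Sum.inl v) from heq]
    tauto
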